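/- Let R, R' be commutative rings, S ⊆ R and S' ⊆ R' multiplicatively closed subsets, M an R-module, M' an R'-module, and N ⊆ M, N' ⊆ M' non-zero submodules. If N × N' is a weakly (S × S')-primary submodule of the (R × R')-module M × M', then either N is an S-primary submodule of M with (N' :_{R'} M') ∩ S' ≠ ∅, or N' is an S'-primary submodule of M' with (N :_R M) ∩ S ≠ ∅. -/

import Mathlib

open Submodule

/-- `N` is a weakly `S`-primary submodule of `M`. -/
def IsWeaklySPrimary {R : Type*} [CommRing R] {M : Type*} [AddCommGroup M] [Module R M]
    (S : Set R) (N : Submodule R M) : Prop :=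
  ((N.colon ⊤ : Ideal R) : Set R) ∩ S = ∅ ∧
    ∃ s ∈ S, ∀ (a : R) (m : M), a • m ≠ 0 → a • m ∈ N →
      s * a ∈ (N.colon ⊤ : Ideal R).radical ∨ s • m ∈ N

/-- `N` is an `S`-primary submodule of `M`. -/
def IsSPrimary {R : Type*} [CommRing R] {M : Type*} [AddCommGroup M] [Module R M]
    (S : Set R) (N : Submodule R M) : Prop :=
  ((N.colon ⊤ : Ideal R) : Set R) ∩ S = ∅ ∧
    ∃ s ∈ S, ∀ (a : R) (m : M), a • m ∈ N →
      s * a ∈ (N.colon ⊤ : Ideal R).radical ∨ s • m ∈ N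

/-- `N` is a weakly primary (proper) submodule of `M`. -/
def IsWeaklyPrimary {R : Type*} [CommRing R] {M : Type*} [AddCommGroup M] [Module R M]
    (N : Submodule R M) : Prop :=
  N ≠ ⊤ ∧ ∀ (a : R) (m : M), a • m ≠ 0 → a • m ∈ N →
      a ∈ (N.colon ⊤ : Ideal R).radical ∨ m ∈ N

/-- `I` is a weakly `S`-primary ideal of `R`. -/
def IsWeaklySPrimaryIdeal {R : Type*} [CommRing R] (S : Set R) (I : Ideal R) : Prop :=
  (I : Set R) ∩ S = ∅ ∧
    ∃ s ∈ S, ∀ a b : R, a * b ≠ 0 → a * b ∈ I → s * a ∈ I.radical ∨ s * b ∈ I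
section Prod

variable {R R' : Type*} [CommRing R] [CommRing R']
variable {M M' : Type*} [AddCommGroup M] [Module R M] [AddCommGroup M'] [Module R' M']

/-- The componentwise `(R × R')`-module structure on `M × M'`. -/
instance prodProdModule : Module (R × R') (M × M') where
  smul r m := (r.1 • m.1, r.2 • m.2)
  one_smul m := Prod.ext (one_smul _ _) (one_smul _ _)
  mul_smul r s m := Prod.ext (mul_smul _ _ _) (mul_smul _ _ _)
  smul_zero r := Prod.ext (smul_zero _) (smul_zero _)
  smul_add r m n := Prod.ext (smul_add _ _ _) (smul_add _ _ _)
  add_smul r s m := Prod.ext (add_smul _ _ _) (add_smul _ _ _)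
  zero_smul m := Prod.ext (zero_smul _ _) (zero_smul _ _)

/-- The submodule `N × N'` of the `(R × R')`-module `M × M'`. -/
def prodSubmodule (N : Submodule R M) (N' : Submodule R' M') :
    Submodule (R × R') (M × M') where
  carrier := (N : Set M) ×ˢ (N' : Set M')
  add_mem' ha hb := ⟨add_mem ha.1 hb.1, add_mem ha.2 hb.2⟩
  zero_mem' := ⟨zero_mem _, zero_mem _⟩
  smul_mem' r x hx := ⟨N.smul_mem r.1 hx.1, N'.smul_mem r.2 hx.2⟩

section Aux
variable {R R' : Type*} [CommRing R] [CommRing R']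
variable {M M' : Type*} [AddCommGroup M] [Module R M] [AddCommGroup M'] [Module R' M']

lemma mem_prodSubmodule {N : Submodule R M} {N' : Submodule R' M'} {x : M × M'} :
    x ∈ prodSubmodule N N' ↔ x.1 ∈ N ∧ x.2 ∈ N' := Iff.rfl

lemma prod_smul_def (r : R × R') (x : M × M') : r • x = (r.1 • x.1, r.2 • x.2) := rfl

lemma mem_colon_prod {N : Submodule R M} {N' : Submodule R' M'} {r : R × R'} :
    r ∈ ((prodSubmodule N N').colon ⊤ : Ideal (R × R')) ↔
      r.1 ∈ (N.colon ⊤ : Ideal R) ∧ r.2 ∈ (N'.colon ⊤ : Ideal R') := by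
  simp only [Submodule.mem_colon, Submodule.mem_top, forall_true_left, true_implies]
  constructor
  · intro h
    refine ⟨fun m _ => ?_, fun m' _ => ?_⟩
    · exact ((mem_prodSubmodule.mp (h (m, 0) (by simp)))).1
    · exact ((mem_prodSubmodule.mp (h (0, m') (by simp)))).2
  · rintro ⟨h1, h2⟩ p _
    exact mem_prodSubmodule.mpr ⟨h1 p.1 (by simp), h2 p.2 (by simp)⟩

lemma mem_rad_colon_prod {N : Submodule R M} {N' : Submodule R' M'} {r : R × R'}
    (h : r ∈ ((prodSubmodule N N').colon ⊤ : Ideal (R × R')).radical) :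
    r.1 ∈ (N.colon ⊤ : Ideal R).radical ∧ r.2 ∈ (N'.colon ⊤ : Ideal R').radical := by
  obtain ⟨n, hn⟩ := Ideal.mem_radical_iff.mp h
  rw [mem_colon_prod] at hn
  exact ⟨Ideal.mem_radical_iff.mpr ⟨n, by simpa [Prod.pow_fst] using hn.1⟩,
    Ideal.mem_radical_iff.mpr ⟨n, by simpa [Prod.pow_snd] using hn.2⟩⟩

lemma rad_inter_nonempty {S : Set R} (hS : ∀ x ∈ S, ∀ y ∈ S, x * y ∈ S) {s : R} (hs : s ∈ S)
    {I : Ideal R} (h : s ∈ I.radical) : ((I : Set R) ∩ S).Nonempty := by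
  obtain ⟨n, hn⟩ := Ideal.mem_radical_iff.mp h
  have hpow : ∀ k : ℕ, s ^ (k + 1) ∈ S := by
    intro k
    induction k with
    | zero => simpa using hs
    | succ k ih => rw [pow_succ]; exact hS _ ih _ hs
  exact ⟨s ^ (n + 1), by rw [pow_succ]; exact I.mul_mem_right _ hn, hpow n⟩

end Aux

theorem stmt18
    (S : Set R) (hS : ∀ x ∈ S, ∀ y ∈ S, x * y ∈ S)
    (S' : Set R') (hS' : ∀ x ∈ S', ∀ y ∈ S', x * y ∈ S')
    (N : Submodule R M) (N' : Submodule R' M') (hN0 : N ≠ ⊥) (hN'0 : N' ≠ ⊥)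
    (h : IsWeaklySPrimary (S ×ˢ S') (prodSubmodule N N')) :
    (IsSPrimary S N ∧ (((N'.colon ⊤ : Ideal R') : Set R') ∩ S').Nonempty) ∨
      (IsSPrimary S' N' ∧ (((N.colon ⊤ : Ideal R) : Set R) ∩ S).Nonempty) := by
  obtain ⟨hdisj, ⟨⟨s, s'⟩, hss', hP⟩⟩ := h
  obtain ⟨hs, hs'⟩ : s ∈ S ∧ s' ∈ S' := hss'
  obtain ⟨n, hnN, hn0⟩ := Submodule.exists_mem_ne_zero_of_ne_bot hN0
  obtain ⟨n', hn'N, hn'0⟩ := Submodule.exists_mem_ne_zero_of_ne_bot hN'0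
  -- disjointness transfer
  have hdisj2 : ∀ x ∈ ((N.colon ⊤ : Ideal R) : Set R) ∩ S,
      ∀ x' ∈ ((N'.colon ⊤ : Ideal R') : Set R') ∩ S', False := by
    rintro x ⟨hx1, hx2⟩ x' ⟨hx'1, hx'2⟩
    have : (x, x') ∈ (((prodSubmodule N N').colon ⊤ : Ideal (R × R')) : Set (R × R')) ∩ (S ×ˢ S') :=
      ⟨mem_colon_prod.mpr ⟨hx1, hx'1⟩, ⟨hx2, hx'2⟩⟩
    rw [hdisj] at this
    exact this
  -- Fact L
  have factL : ∀ (a : R) (m : M), a • m ∈ N →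
      (s * a ∈ (N.colon ⊤ : Ideal R).radical ∧ s' ∈ (N'.colon ⊤ : Ideal R').radical)
        ∨ s • m ∈ N := by
    intro a m ham
    have hne : (a, (1 : R')) • (m, n') ≠ 0 := by
      rw [prod_smul_def]
      intro hz
      exact hn'0 (by simpa using congrArg Prod.snd hz)
    have hmem : (a, (1 : R')) • (m, n') ∈ prodSubmodule N N' := by
      rw [prod_smul_def]; exact mem_prodSubmodule.mpr ⟨ham, by simpa using hn'N⟩
    rcases hP (a, 1) (m, n') hne hmem with h1 | h2
    · have := mem_rad_colon_prod h1
      exact Or.inl ⟨this.1, by simpa using this.2⟩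
    · exact Or.inr (mem_prodSubmodule.mp h2).1
  have factL' : ∀ (a' : R') (m' : M'), a' • m' ∈ N' →
      (s' * a' ∈ (N'.colon ⊤ : Ideal R').radical ∧ s ∈ (N.colon ⊤ : Ideal R).radical)
        ∨ s' • m' ∈ N' := by
    intro a' m' ham
    have hne : ((1 : R), a') • (n, m') ≠ 0 := by
      rw [prod_smul_def]
      intro hz
      exact hn0 (by simpa using congrArg Prod.fst hz)
    have hmem : ((1 : R), a') • (n, m') ∈ prodSubmodule N N' := by
      rw [prod_smul_def]; exact mem_prodSubmodule.mpr ⟨by simpa using hnN, ham⟩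
    rcases hP (1, a') (n, m') hne hmem with h1 | h2
    · have := mem_rad_colon_prod h1
      exact Or.inl ⟨by simpa using this.2, by simpa using this.1⟩
    · exact Or.inr (mem_prodSubmodule.mp h2).2
  by_cases hA : ∃ (a : R) (m : M), a • m ∈ N ∧ s • m ∉ N
  · -- s' ∈ rad colon N', so (colon N' ∩ S') nonempty; N is S-primary
    obtain ⟨a, m, ham, hsm⟩ := hA
    have hs'rad : s' ∈ (N'.colon ⊤ : Ideal R').radical :=
      ((factL a m ham).resolve_right hsm).2
    have hne' : (((N'.colon ⊤ : Ideal R') : Set R') ∩ S').Nonempty :=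
      rad_inter_nonempty hS' hs' hs'rad
    refine Or.inl ⟨⟨?_, s, hs, fun a m ham => (factL a m ham).imp And.left id⟩, hne'⟩
    obtain ⟨x', hx'⟩ := hne'
    rw [Set.eq_empty_iff_forall_notMem]
    rintro x hx
    exact hdisj2 x hx x' hx'
  · push_neg at hA
    have hscol : s ∈ (N.colon ⊤ : Ideal R) := by
      rw [Submodule.mem_colon]
      intro m _
      exact hA 0 m (by simp)
    have hne : (((N.colon ⊤ : Ideal R) : Set R) ∩ S).Nonempty := ⟨s, hscol, hs⟩
    refine Or.inr ⟨⟨?_, s', hs', fun a' m' ham => (factL' a' m' ham).imp And.left id⟩, hne⟩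
    obtain ⟨x, hx⟩ := hne
    rw [Set.eq_empty_iff_forall_notMem]
    rintro x' hx'
    exact hdisj2 x hx x' hx'

end Prod
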